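/- If a signed graph Γ = (G, σ) has at least one edge, then μ₁(Γ) ≥ d₁(Γ) + 1, where μ₁(Γ) is the largest Laplacian eigenvalue and d₁(Γ) is the maximum vertex degree of the underlying graph. -/

import Mathlib

open Matrix Polynomial

open scoped RealInnerProductSpace in
lemma rayleigh_aux' {m : Type*} [Fintype m] [DecidableEq m] [Nonempty m]
    {A : Matrix m m ℝ} (hA : A.IsHermitian) (x : EuclideanSpace ℝ m) (r : ℝ)
    (hx : (0:ℝ) < ⟪x, x⟫)
    (hq : r * ⟪x, x⟫ ≤ ⟪x, Matrix.toEuclideanLin A x⟫) :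
    ∃ i, r ≤ hA.eigenvalues i := by
  classical
  set T := Matrix.toEuclideanLin A with hT
  have hsymm : T.IsSymmetric := (Matrix.isHermitian_iff_isSymmetric).1 hA
  set b := hA.eigenvectorBasis with hb
  have hTb : ∀ i, T (b i) = hA.eigenvalues i • b i := by
    intro i
    have h1 : T (b i) = (WithLp.equiv 2 (m → ℝ)).symm (A *ᵥ ⇑(b i)) :=
      Matrix.toEuclideanLin_apply A (b i)
    rw [h1, hA.mulVec_eigenvectorBasis]
    rfl
  have key : ∀ y : EuclideanSpace ℝ m, ⟪x, y⟫ = ∑ i, ⟪x, b i⟫ * ⟪b i, y⟫ :=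
    fun y => (b.sum_inner_mul_inner x y).symm
  have h2 : ⟪x, T x⟫ = ∑ i, hA.eigenvalues i * ⟪x, b i⟫ ^ 2 := by
    rw [key]
    refine Finset.sum_congr rfl fun i _ => ?_
    have : ⟪b i, T x⟫ = hA.eigenvalues i * ⟪b i, x⟫ := by
      rw [← hsymm (b i) x, hTb i, real_inner_smul_left]
    rw [this, real_inner_comm (b i) x]; ring
  have h3 : ⟪x, x⟫ = ∑ i, ⟪x, b i⟫ ^ 2 := by
    rw [key]
    refine Finset.sum_congr rfl fun i _ => ?_
    rw [real_inner_comm (b i) x]; ring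
  obtain ⟨i0, -, hmax⟩ := Finset.exists_max_image Finset.univ hA.eigenvalues
    ⟨Classical.arbitrary m, Finset.mem_univ _⟩
  refine ⟨i0, ?_⟩
  have hle : ⟪x, T x⟫ ≤ hA.eigenvalues i0 * ⟪x, x⟫ := by
    rw [h2, h3, Finset.mul_sum]
    exact Finset.sum_le_sum fun i _ =>
      mul_le_mul_of_nonneg_right (hmax i (Finset.mem_univ i)) (sq_nonneg _)
  exact (mul_le_mul_iff_of_pos_right hx).1 (le_trans hq hle)

lemma charpoly_root_of_spectrum' {m : Type*} [Fintype m] [DecidableEq m]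
    (A : Matrix m m ℝ) {t : ℝ} (ht : t ∈ spectrum ℝ A) :
    A.charpoly.eval t = 0 := by
  have h1 : ¬ IsUnit (algebraMap ℝ (Matrix m m ℝ) t - A) := spectrum.mem_iff.1 ht
  have h2 : (algebraMap ℝ (Matrix m m ℝ) t - A).det = 0 := by
    by_contra hdet
    exact h1 ((Matrix.isUnit_iff_isUnit_det _).2 (isUnit_iff_ne_zero.2 hdet))
  calc A.charpoly.eval t = ((Matrix.charmatrix A).map (Polynomial.evalRingHom t)).det := by
        rw [Matrix.charpoly]
        exact (RingHom.map_det (Polynomial.evalRingHom t) _)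
    _ = (algebraMap ℝ (Matrix m m ℝ) t - A).det := by
        congr 1
        ext i j
        by_cases hij : i = j
        · subst hij
          simp [Matrix.charmatrix_apply_eq, Matrix.algebraMap_matrix_apply]
        · simp [Matrix.charmatrix_apply_ne _ _ _ hij, Matrix.algebraMap_matrix_apply, hij]
    _ = 0 := h2


/-- If a signed graph has at least one edge, then its largest Laplacian
eigenvalue is at least the maximum degree plus one. -/
theorem stmt_16 {n : ℕ} (hn : 0 < n) (G : SimpleGraph (Fin n)) [DecidableRel G.Adj]
    (σ : Fin n → Fin n → ℝ)
    (hσ : ∀ i j, G.Adj i j → σ i j = 1 ∨ σ i j = -1)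
    (hsym : ∀ i j, σ i j = σ j i)
    (hedge : ∃ u v, G.Adj u v)
    (L : Matrix (Fin n) (Fin n) ℝ)
    (hL : L = fun i j => (if i = j then (G.degree i : ℝ) else 0) -
      (if G.Adj i j then σ i j else 0))
    (μ : Fin n → ℝ) (hmono : Antitone μ)
    (hchar : L.charpoly = ∏ i, (X - C (μ i))) :
    (G.maxDegree : ℝ) + 1 ≤ μ ⟨0, hn⟩ := by
  classical
  have hne : Nonempty (Fin n) := ⟨⟨0, hn⟩⟩
  -- vertex of maximal degree
  obtain ⟨u, hu⟩ := G.exists_maximal_degree_vertex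
  set d : ℝ := (G.maxDegree : ℝ) with hd
  obtain ⟨a, bb, hab⟩ := hedge
  have hdeg1 : 1 ≤ G.maxDegree := by
    have h0 : 0 < G.degree a := (G.degree_pos_iff_exists_adj a).2 ⟨bb, hab⟩
    exact lt_of_lt_of_le h0 (G.degree_le_maxDegree a)
  have hd1 : (1:ℝ) ≤ d := by rw [hd]; exact_mod_cast hdeg1
  have hdu : (G.degree u : ℝ) = d := by rw [hd, hu]
  -- Hermitian
  have hherm : L.IsHermitian := by
    rw [Matrix.IsHermitian]
    ext i j
    rw [Matrix.conjTranspose_apply, hL]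
    dsimp only
    rw [star_trivial]
    by_cases hij : i = j
    · subst hij; rfl
    · rw [if_neg (Ne.symm hij), if_neg hij, hsym j i,
        if_congr (G.adj_comm j i) rfl rfl]
  -- test vector
  set x : EuclideanSpace ℝ (Fin n) :=
    WithLp.toLp 2 (fun w => if w = u then d else if G.Adj u w then -σ u w else 0) with hx
  have hxu : x u = d := by rw [hx]; exact if_pos rfl
  have hxadj : ∀ w, G.Adj u w → x w = -σ u w := by
    intro w hw
    rw [hx]; dsimp only; rw [if_neg hw.ne', if_pos hw]
  have hσsq : ∀ i j, G.Adj i j → σ i j ^ 2 = 1 := by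
    intro i j h; rcases hσ i j h with h1 | h1 <;> rw [h1] <;> norm_num
  -- helper: sum over neighbours of a constant
  have hadj_sum : ∀ (v : Fin n) (cst : ℝ),
      ∑ w, (if G.Adj v w then cst else 0) = (G.degree v : ℝ) * cst := by
    intro v cst
    calc ∑ w, (if G.Adj v w then cst else 0)
        = ∑ w ∈ Finset.univ.filter (G.Adj v), cst := (Finset.sum_filter _ _).symm
      _ = (Finset.univ.filter (G.Adj v)).card • cst := Finset.sum_const cst
      _ = (G.degree v : ℝ) * cst := by
          rw [← SimpleGraph.neighborFinset_eq_filter, SimpleGraph.card_neighborFinset_eq_degree,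
            nsmul_eq_mul]
  -- inner product of x with itself
  have hxx : (inner ℝ x x : ℝ) = d ^ 2 + d := by
    rw [PiLp.inner_apply]
    simp only [RCLike.inner_apply, starRingEnd_apply, star_trivial]
    have hpt : ∀ w, x w * x w =
        (if w = u then d ^ 2 else 0) + (if G.Adj u w then 1 else 0) := by
      intro w
      by_cases hwu : w = u
      · subst hwu
        rw [hxu, if_pos rfl, if_neg (G.irrefl)]; ring
      · rw [if_neg hwu]
        by_cases h : G.Adj u w
        · rw [hxadj w h, if_pos h]
          have := hσsq u w h
          linear_combination this
        · rw [if_neg h]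
          rw [hx]; dsimp only; rw [if_neg hwu, if_neg h]; ring
    rw [Finset.sum_congr rfl fun w _ => hpt w, Finset.sum_add_distrib,
      Finset.sum_ite_eq' Finset.univ u fun _ => d ^ 2, if_pos (Finset.mem_univ u),
      hadj_sum u 1, hdu]
    ring
  -- edge square terms
  set c : Fin n → Fin n → ℝ :=
    (fun i j => if G.Adj i j then (x i - σ i j * x j) ^ 2 else 0) with hcdef
  have hc0 : ∀ i j, 0 ≤ c i j := by
    intro i j; rw [hcdef]; dsimp only
    split
    · exact sq_nonneg _
    · exact le_refl 0
  have hcsymm : ∀ i j, c i j = c j i := by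
    intro i j
    rw [hcdef]; dsimp only
    by_cases h : G.Adj i j
    · rw [if_pos h, if_pos h.symm, hsym i j]
      have hs := hσsq j i h.symm
      linear_combination (x j ^ 2 - x i ^ 2) * hs
    · rw [if_neg h, if_neg fun hh => h hh.symm]
  have hrow : ∑ j, c u j = d * (d + 1) ^ 2 := by
    have hpt : ∀ j, c u j = if G.Adj u j then (d + 1) ^ 2 else 0 := by
      intro j
      rw [hcdef]; dsimp only
      by_cases h : G.Adj u j
      · rw [if_pos h, if_pos h, hxu, hxadj j h]
        have hs := hσsq u j h
        linear_combination (2 * d + σ u j ^ 2 + 1) * hs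
      · rw [if_neg h, if_neg h]
    rw [Finset.sum_congr rfl fun j _ => hpt j, hadj_sum u ((d + 1) ^ 2), hdu]
  -- the quadratic form identity
  have hQ' : ∑ i, ∑ j, x i * L i j * x j =
      (∑ i, (G.degree i : ℝ) * x i ^ 2) -
      ∑ i, ∑ j, (if G.Adj i j then σ i j * x i * x j else 0) := by
    have hpt : ∀ i j, x i * L i j * x j =
        (if i = j then (G.degree i : ℝ) * x i ^ 2 else 0) -
        (if G.Adj i j then σ i j * x i * x j else 0) := by
      intro i j
      rw [hL]; dsimp only
      by_cases hij : i = j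
      · subst hij
        rw [if_pos rfl, if_pos rfl, if_neg (G.irrefl), if_neg (G.irrefl)]; ring
      · rw [if_neg hij, if_neg hij]
        by_cases h : G.Adj i j
        · rw [if_pos h, if_pos h]; ring
        · rw [if_neg h, if_neg h]; ring
    simp_rw [hpt, Finset.sum_sub_distrib]
    congr 1
    refine Finset.sum_congr rfl fun i _ => ?_
    rw [Finset.sum_ite_eq Finset.univ i fun _ => (G.degree i : ℝ) * x i ^ 2,
      if_pos (Finset.mem_univ i)]
  have hC' : ∑ i, ∑ j, c i j =
      2 * (∑ i, (G.degree i : ℝ) * x i ^ 2) -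
      2 * ∑ i, ∑ j, (if G.Adj i j then σ i j * x i * x j else 0) := by
    have hpt : ∀ i j, c i j =
        (if G.Adj i j then x i ^ 2 else 0) + (if G.Adj i j then x j ^ 2 else 0) -
        2 * (if G.Adj i j then σ i j * x i * x j else 0) := by
      intro i j
      rw [hcdef]; dsimp only
      by_cases h : G.Adj i j
      · rw [if_pos h, if_pos h, if_pos h, if_pos h]
        have hs := hσsq i j h
        linear_combination x j ^ 2 * hs
      · rw [if_neg h, if_neg h, if_neg h, if_neg h]; ring
    have e1 : ∑ i, ∑ j, (if G.Adj i j then x i ^ 2 else 0)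
        = ∑ i, (G.degree i : ℝ) * x i ^ 2 :=
      Finset.sum_congr rfl fun i _ => hadj_sum i (x i ^ 2)
    have e2 : ∑ i, ∑ j, (if G.Adj i j then x j ^ 2 else 0)
        = ∑ i, (G.degree i : ℝ) * x i ^ 2 := by
      rw [Finset.sum_comm]
      refine Finset.sum_congr rfl fun j _ => ?_
      rw [Finset.sum_congr rfl fun i _ => if_congr (G.adj_comm i j) rfl rfl]
      exact hadj_sum j (x j ^ 2)
    simp_rw [hpt, Finset.sum_sub_distrib, Finset.sum_add_distrib, ← Finset.mul_sum]
    rw [e1, e2]; ring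
  have hsum_c : ∑ i, ∑ j, c i j = 2 * ∑ i, ∑ j, x i * L i j * x j := by
    rw [hC', hQ']; ring
  -- lower bound on the sum of squares
  have hlow : d * (d + 1) ^ 2 * 2 ≤ ∑ i, ∑ j, c i j := by
    have step1 : ∑ i, ∑ j, c i j =
        (∑ j, c u j) + ∑ i ∈ Finset.univ.erase u, ∑ j, c i j :=
      (Finset.add_sum_erase _ _ (Finset.mem_univ u)).symm
    have step2 : ∑ i ∈ Finset.univ.erase u, c i u ≤
        ∑ i ∈ Finset.univ.erase u, ∑ j, c i j :=
      Finset.sum_le_sum fun i _ => Finset.single_le_sum (fun j _ => hc0 i j) (Finset.mem_univ u)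
    have step3 : ∑ i ∈ Finset.univ.erase u, c i u = ∑ j, c u j := by
      rw [Finset.sum_congr rfl fun i _ => hcsymm i u,
        Finset.sum_erase_eq_sub (Finset.mem_univ u), if_neg (G.irrefl), sub_zero]
    calc d * (d + 1) ^ 2 * 2 = (∑ j, c u j) + (∑ j, c u j) := by rw [hrow]; ring
      _ ≤ (∑ j, c u j) + ∑ i ∈ Finset.univ.erase u, ∑ j, c i j := by
          rw [← step3] at *; exact add_le_add_right step2 _
      _ = ∑ i, ∑ j, c i j := step1.symm
  have hQge : (d + 1) * (d ^ 2 + d) ≤ ∑ i, ∑ j, x i * L i j * x j := by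
    nlinarith [hsum_c, hlow]
  have hinner2 : (inner ℝ x (Matrix.toEuclideanLin L x) : ℝ) = ∑ i, ∑ j, x i * L i j * x j := by
    rw [PiLp.inner_apply]
    simp only [RCLike.inner_apply, starRingEnd_apply, star_trivial]
    have hT : ∀ i, (Matrix.toEuclideanLin L x) i = ∑ j, L i j * x j := fun i => rfl
    rw [Finset.sum_congr rfl fun i _ => by rw [hT i]]
    refine Finset.sum_congr rfl fun i _ => ?_
    rw [Finset.sum_mul]
    exact Finset.sum_congr rfl fun j _ => by ring
  have hxxpos : (0:ℝ) < inner ℝ x x := by rw [hxx]; nlinarith [hd1]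
  obtain ⟨i0, hi0⟩ := rayleigh_aux' hherm x (d + 1) hxxpos
    (by rw [hxx, hinner2]; exact hQge)
  have hspec := hherm.eigenvalues_mem_spectrum_real i0
  have hroot : L.charpoly.eval (hherm.eigenvalues i0) = 0 :=
    charpoly_root_of_spectrum' L hspec
  rw [hchar] at hroot
  simp only [Polynomial.eval_prod, Polynomial.eval_sub, Polynomial.eval_X,
    Polynomial.eval_C] at hroot
  obtain ⟨j, -, hj⟩ := Finset.prod_eq_zero_iff.1 hroot
  have hμj : μ j = hherm.eigenvalues i0 := by
    have := sub_eq_zero.1 hj; linarith [this]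
  have hle0 : μ j ≤ μ ⟨0, hn⟩ := hmono (by simp [Fin.le_def])
  linarith [hi0, hle0]
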